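/- Let A be an open bounded subset of ℝⁿ, M > 0, and let (f_k) be a sequence in L²(A) with 0 ≤ f_k ≤ M, converging weakly in L²(A) to f with 0 ≤ f ≤ M. If additionally f(x) ≥ limsup_k f_k(x) for almost every x ∈ A, then f_k → f strongly in L²(A) (and hence in L¹(A)). -/

import Mathlib

open MeasureTheory Filter

private lemma aux_limsup_sq {α : Type*} [MeasurableSpace α] {μ : Measure α} [IsFiniteMeasure μ]
    {fk : ℕ → α → ℝ} {f : α → ℝ} {M : ℝ} (hM : 0 < M)
    (hmeas : ∀ k, AEStronglyMeasurable (fk k) μ) (hfmeas : AEStronglyMeasurable f μ)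
    (hbk : ∀ k, ∀ᵐ x ∂μ, 0 ≤ fk k x ∧ fk k x ≤ M)
    (hbf : ∀ᵐ x ∂μ, 0 ≤ f x ∧ f x ≤ M)
    (hae : ∀ᵐ x ∂μ, limsup (fun k => fk k x) atTop ≤ f x) :
    limsup (fun k => ∫ x, fk k x ^ 2 ∂μ) atTop ≤ ∫ x, f x ^ 2 ∂μ := by
  have hbd : ∀ (g : α → ℝ) (C : ℝ), AEStronglyMeasurable g μ → (∀ᵐ x ∂μ, ‖g x‖ ≤ C) →
      Integrable g μ := fun g C hg hb => (MemLp.of_bound hg C hb).integrable le_rfl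
  have hint : ∀ k, Integrable (fun x => fk k x ^ 2) μ := by
    intro k
    refine hbd _ (M ^ 2) (((hmeas k).mul (hmeas k)).congr (Eventually.of_forall fun x => by simp [pow_two])) ?_
    filter_upwards [hbk k] with x hx
    rw [Real.norm_eq_abs, abs_le]
    constructor <;> nlinarith [hx.1, hx.2]
  have hfint : Integrable (fun x => f x ^ 2) μ := by
    refine hbd _ (M ^ 2) ((hfmeas.mul hfmeas).congr (Eventually.of_forall fun x => by simp [pow_two])) ?_
    filter_upwards [hbf] with x hx
    rw [Real.norm_eq_abs, abs_le]
    constructor <;> nlinarith [hx.1, hx.2]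
  -- Fatou
  have hameas : ∀ k, AEMeasurable (fun x => ENNReal.ofReal (M ^ 2 - fk k x ^ 2)) μ := by
    intro k
    exact (aemeasurable_const.sub (((hmeas k).aemeasurable).pow aemeasurable_const)).ennreal_ofReal
  have fatou := lintegral_liminf_le' (μ := μ) (u := atTop)
    (f := fun k x => ENNReal.ofReal (M ^ 2 - fk k x ^ 2)) hameas
  have hpt : ∀ᵐ x ∂μ, ENNReal.ofReal (M ^ 2 - f x ^ 2) ≤
      liminf (fun k => ENNReal.ofReal (M ^ 2 - fk k x ^ 2)) atTop := by
    have hball : ∀ᵐ x ∂μ, ∀ k, 0 ≤ fk k x ∧ fk k x ≤ M := ae_all_iff.mpr hbk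
    filter_upwards [hball, hbf, hae] with x hx hfx hlim
    set b : ℕ → ℝ := fun k => fk k x with hb
    have hb0 : ∀ k, 0 ≤ b k := fun k => (hx k).1
    have hbM : ∀ k, b k ≤ M := fun k => (hx k).2
    have bdd_above : IsBoundedUnder (· ≤ ·) atTop b := isBoundedUnder_of ⟨M, hbM⟩
    have bdd_below : IsBoundedUnder (· ≥ ·) atTop b := isBoundedUnder_of ⟨0, hb0⟩
    set φ : ℝ → ℝ := fun t => max t 0 ^ 2 with hφ
    have φmono : Monotone φ := fun a b h =>
      pow_le_pow_left₀ (le_max_right _ _) (max_le_max h le_rfl) 2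
    have φcont : Continuous φ := by continuity
    have h1 := φmono.map_limsup_of_continuousAt b φcont.continuousAt bdd_above
      bdd_below.isCoboundedUnder_le
    have h2 : (fun k => b k ^ 2) = φ ∘ b := funext fun k => by
      simp [hφ, max_eq_left (hb0 k)]
    have hsq : limsup (fun k => b k ^ 2) atTop ≤ f x ^ 2 := by
      rw [h2, ← h1]
      calc φ (limsup b atTop) ≤ φ (f x) := φmono hlim
        _ = f x ^ 2 := by simp [hφ, max_eq_left hfx.1]
    have bdd_above2 : IsBoundedUnder (· ≤ ·) atTop (fun k => b k ^ 2) :=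
      isBoundedUnder_of ⟨M ^ 2, fun k => by nlinarith [hb0 k, hbM k]⟩
    have bdd_below2 : IsBoundedUnder (· ≥ ·) atTop (fun k => b k ^ 2) :=
      isBoundedUnder_of ⟨0, fun k => sq_nonneg _⟩
    have h3 : liminf (fun k => M ^ 2 - b k ^ 2) atTop = M ^ 2 - limsup (fun k => b k ^ 2) atTop :=
      liminf_const_sub atTop _ (M ^ 2) bdd_above2 bdd_below2.isCoboundedUnder_le
    have h4 : liminf (fun k => ENNReal.ofReal (M ^ 2 - b k ^ 2)) atTop =
        ENNReal.ofReal (liminf (fun k => M ^ 2 - b k ^ 2) atTop) := by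
      refine (Monotone.map_liminf_of_continuousAt (f := ENNReal.ofReal)
        (fun _ _ h => ENNReal.ofReal_le_ofReal h) _
        ENNReal.continuous_ofReal.continuousAt ?_ ?_).symm
      · exact (isBoundedUnder_of ⟨M ^ 2, fun k => by nlinarith [hb0 k, hbM k]⟩ :
          IsBoundedUnder (· ≤ ·) atTop _).isCoboundedUnder_ge
      · exact isBoundedUnder_of ⟨0, fun k => by nlinarith [hbM k, hb0 k]⟩
    calc ENNReal.ofReal (M ^ 2 - f x ^ 2)
        ≤ ENNReal.ofReal (M ^ 2 - limsup (fun k => b k ^ 2) atTop) :=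
          ENNReal.ofReal_le_ofReal (by linarith)
      _ = liminf (fun k => ENNReal.ofReal (M ^ 2 - b k ^ 2)) atTop := by rw [h4, h3]
  set C0 : ℝ := (μ Set.univ).toReal * M ^ 2 with hC0
  have hu_int : ∀ k, Integrable (fun x => M ^ 2 - fk k x ^ 2) μ :=
    fun k => (integrable_const _).sub (hint k)
  have hf_int' : Integrable (fun x => M ^ 2 - f x ^ 2) μ := (integrable_const _).sub hfint
  set u : ℕ → ℝ := fun k => ∫ x, (M ^ 2 - fk k x ^ 2) ∂μ with hu
  have hconv : ∀ k, ∫⁻ x, ENNReal.ofReal (M ^ 2 - fk k x ^ 2) ∂μ = ENNReal.ofReal (u k) := by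
    intro k
    rw [← ofReal_integral_eq_lintegral_ofReal (hu_int k)]
    filter_upwards [hbk k] with x hx
    simp only [Pi.zero_apply]
    nlinarith [hx.1, hx.2]
  have hconvf : ∫⁻ x, ENNReal.ofReal (M ^ 2 - f x ^ 2) ∂μ =
      ENNReal.ofReal (∫ x, (M ^ 2 - f x ^ 2) ∂μ) := by
    rw [← ofReal_integral_eq_lintegral_ofReal hf_int']
    filter_upwards [hbf] with x hx
    simp only [Pi.zero_apply]
    nlinarith [hx.1, hx.2]
  have chain : ENNReal.ofReal (∫ x, (M ^ 2 - f x ^ 2) ∂μ) ≤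
      liminf (fun k => ENNReal.ofReal (u k)) atTop := by
    rw [← hconvf]
    refine le_trans (lintegral_mono_ae hpt) ?_
    simpa only [hconv] using fatou
  have hu0 : ∀ k, 0 ≤ u k := fun k => integral_nonneg_of_ae (by
    filter_upwards [hbk k] with x hx
    simp only [Pi.zero_apply]
    nlinarith [hx.1, hx.2])
  have huC : ∀ k, u k ≤ C0 := by
    intro k
    have h := integral_mono_ae (hu_int k) (integrable_const (M ^ 2)) (by
      filter_upwards [hbk k] with x hx; nlinarith [hx.1, hx.2])
    simpa [integral_const, smul_eq_mul, hC0, measureReal_def] using h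
  have h5 : liminf (fun k => ENNReal.ofReal (u k)) atTop = ENNReal.ofReal (liminf u atTop) :=
    (Monotone.map_liminf_of_continuousAt (f := ENNReal.ofReal)
      (fun _ _ h => ENNReal.ofReal_le_ofReal h) u ENNReal.continuous_ofReal.continuousAt
      ((isBoundedUnder_of ⟨C0, huC⟩ : IsBoundedUnder (· ≤ ·) atTop u).isCoboundedUnder_ge)
      (isBoundedUnder_of ⟨0, hu0⟩)).symm
  have hliminf_nonneg : (0:ℝ) ≤ liminf u atTop :=
    le_liminf_of_le ((isBoundedUnder_of ⟨C0, huC⟩ :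
      IsBoundedUnder (· ≤ ·) atTop u).isCoboundedUnder_ge) (Eventually.of_forall hu0)
  have hreal : ∫ x, (M ^ 2 - f x ^ 2) ∂μ ≤ liminf u atTop := by
    rw [h5] at chain
    exact (ENNReal.ofReal_le_ofReal_iff hliminf_nonneg).mp chain
  have hsplitf : ∫ x, (M ^ 2 - f x ^ 2) ∂μ = C0 - ∫ x, f x ^ 2 ∂μ := by
    rw [integral_sub (integrable_const _) hfint, integral_const, smul_eq_mul, hC0, measureReal_def]
  have hsplit : ∀ k, u k = C0 - ∫ x, fk k x ^ 2 ∂μ := by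
    intro k
    rw [hu]
    simp only []
    rw [integral_sub (integrable_const _) (hint k), integral_const, smul_eq_mul, hC0, measureReal_def]
  have hIa : ∀ k, ∫ x, fk k x ^ 2 ∂μ ≤ C0 := fun k => by linarith [hu0 k, hsplit k]
  have hIb : ∀ k, (0:ℝ) ≤ ∫ x, fk k x ^ 2 ∂μ := fun k => integral_nonneg fun x => sq_nonneg _
  have h6 : liminf u atTop = C0 - limsup (fun k => ∫ x, fk k x ^ 2 ∂μ) atTop := by
    have hue : u = fun k => C0 - ∫ x, fk k x ^ 2 ∂μ := funext hsplit
    rw [hue]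
    exact liminf_const_sub atTop _ C0 (isBoundedUnder_of ⟨C0, hIa⟩)
      (isBoundedUnder_of ⟨0, hIb⟩).isCoboundedUnder_le
  rw [hsplitf, h6] at hreal
  linarith

private lemma aux_main {α : Type*} [MeasurableSpace α] {μ : Measure α} [IsFiniteMeasure μ]
    {fk : ℕ → α → ℝ} {f : α → ℝ} {M : ℝ} (hM : 0 < M)
    (hmeas : ∀ k, AEStronglyMeasurable (fk k) μ) (hfmeas : AEStronglyMeasurable f μ)
    (hbk : ∀ k, ∀ᵐ x ∂μ, 0 ≤ fk k x ∧ fk k x ≤ M)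
    (hbf : ∀ᵐ x ∂μ, 0 ≤ f x ∧ f x ≤ M)
    (hweak : ∀ g : α → ℝ, MemLp g 2 μ →
      Tendsto (fun k => ∫ x, fk k x * g x ∂μ) atTop (nhds (∫ x, f x * g x ∂μ)))
    (hae : ∀ᵐ x ∂μ, limsup (fun k => fk k x) atTop ≤ f x) :
    Tendsto (fun k => ∫ x, |fk k x - f x| ^ 2 ∂μ) atTop (nhds 0) ∧
    Tendsto (fun k => ∫ x, |fk k x - f x| ∂μ) atTop (nhds 0) := by

  -- MemLp facts
  have hfk2 : ∀ k, MemLp (fk k) 2 μ := by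
    intro k
    refine MemLp.of_bound (hmeas k) M ?_
    filter_upwards [hbk k] with x hx
    rw [Real.norm_eq_abs, abs_le]
    exact ⟨by linarith [hx.1], hx.2⟩
  have hf2 : MemLp f 2 μ := by
    refine MemLp.of_bound hfmeas M ?_
    filter_upwards [hbf] with x hx
    rw [Real.norm_eq_abs, abs_le]
    exact ⟨by linarith [hx.1], hx.2⟩
  set I : ℕ → ℝ := fun k => ∫ x, fk k x ^ 2 ∂μ with hI
  set J : ℕ → ℝ := fun k => ∫ x, fk k x * f x ∂μ with hJdef
  set C : ℝ := ∫ x, f x ^ 2 ∂μ with hC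
  have hJ : Tendsto J atTop (nhds C) := by
    have h := hweak f hf2
    simpa only [hC, hJdef, pow_two] using h
  -- integrability
  have hIk_int : ∀ k, Integrable (fun x => fk k x ^ 2) μ := fun k => (hfk2 k).integrable_sq
  have hfint : Integrable (fun x => f x ^ 2) μ := hf2.integrable_sq
  have hJint : ∀ k, Integrable (fun x => fk k x * f x) μ := by
    intro k
    refine (MemLp.of_bound ((hmeas k).mul hfmeas) (M * M) ?_).integrable le_rfl
    filter_upwards [hbk k, hbf] with x hx hfx
    simp only [Pi.mul_apply]
    rw [Real.norm_eq_abs, abs_le]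
    constructor <;> nlinarith [hx.1, hx.2, hfx.1, hfx.2]
  set C0 : ℝ := (μ Set.univ).toReal * M ^ 2 with hC0
  have hIa : ∀ k, I k ≤ C0 := by
    intro k
    have h := integral_mono_ae (hIk_int k) (integrable_const (M ^ 2)) (by
      filter_upwards [hbk k] with x hx; nlinarith [hx.1, hx.2])
    simpa [integral_const, smul_eq_mul, hC0, measureReal_def] using h
  have hIb : ∀ k, (0:ℝ) ≤ I k := fun k => integral_nonneg fun x => sq_nonneg _
  -- limsup bound via Fatou
  have hlimsupI : limsup I atTop ≤ C :=
    aux_limsup_sq hM hmeas hfmeas hbk hbf hae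
  -- expansion identity
  have hexp : ∀ k, ∫ x, (fk k x - f x) ^ 2 ∂μ = I k - 2 * J k + C := by
    intro k
    have hptw : ∀ x, (fk k x - f x) ^ 2 = fk k x ^ 2 - 2 * (fk k x * f x) + f x ^ 2 :=
      fun x => by ring
    calc ∫ x, (fk k x - f x) ^ 2 ∂μ
        = ∫ x, (fk k x ^ 2 - 2 * (fk k x * f x) + f x ^ 2) ∂μ := by simp only [hptw]
      _ = (∫ x, (fk k x ^ 2 - 2 * (fk k x * f x)) ∂μ) + ∫ x, f x ^ 2 ∂μ :=
          integral_add ((hIk_int k).sub ((hJint k).const_mul 2)) hfint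
      _ = ((∫ x, fk k x ^ 2 ∂μ) - ∫ x, 2 * (fk k x * f x) ∂μ) + C := by
          rw [integral_sub (hIk_int k) ((hJint k).const_mul 2)]
      _ = I k - 2 * J k + C := by rw [integral_const_mul]
  have hnn : ∀ k, 0 ≤ I k - 2 * J k + C := by
    intro k
    have h0 : (0:ℝ) ≤ ∫ x, (fk k x - f x) ^ 2 ∂μ := integral_nonneg fun x => sq_nonneg _
    linarith [hexp k, h0]
  have htend2JC : Tendsto (fun k => 2 * J k - C) atTop (nhds C) := by
    have h := (hJ.const_mul 2).sub_const C
    have : (2:ℝ) * C - C = C := by ring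
    rwa [this] at h
  have hliminfI : C ≤ liminf I atTop := by
    rw [← htend2JC.liminf_eq]
    exact liminf_le_liminf (Eventually.of_forall fun k => by linarith [hnn k])
      htend2JC.isBoundedUnder_ge
      ((isBoundedUnder_of ⟨C0, hIa⟩ : IsBoundedUnder (· ≤ ·) atTop I).isCoboundedUnder_ge)
  have hItends : Tendsto I atTop (nhds C) :=
    tendsto_of_le_liminf_of_limsup_le hliminfI hlimsupI
      (isBoundedUnder_of ⟨C0, hIa⟩) (isBoundedUnder_of ⟨0, hIb⟩)
  -- L² convergence
  have hL2 : Tendsto (fun k => ∫ x, |fk k x - f x| ^ 2 ∂μ) atTop (nhds 0) := by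
    have heq : (fun k => ∫ x, |fk k x - f x| ^ 2 ∂μ) = fun k => I k - 2 * J k + C := by
      funext k
      simp only [sq_abs]
      exact hexp k
    rw [heq]
    have h := (hItends.sub (hJ.const_mul 2)).add_const C
    have : C - 2 * C + C = 0 := by ring
    rwa [this] at h
  refine ⟨hL2, ?_⟩
  -- L¹ convergence via Cauchy–Schwarz
  have hmemabs : ∀ k, MemLp (fun x => |fk k x - f x|) 2 μ := by
    intro k
    have h := ((hfk2 k).sub hf2).norm
    simpa only [Pi.sub_apply, Real.norm_eq_abs] using h
  have hconj : Real.HolderConjugate 2 2 := ⟨by norm_num, by norm_num, by norm_num⟩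
  have hone : MemLp (fun _ : α => (1:ℝ)) 2 μ := memLp_const 1
  have hhold : ∀ k, ∫ x, |fk k x - f x| ∂μ ≤
      (∫ x, |fk k x - f x| ^ 2 ∂μ) ^ ((1:ℝ)/2) * ((μ Set.univ).toReal) ^ ((1:ℝ)/2) := by
    intro k
    have h := integral_mul_le_Lp_mul_Lq_of_nonneg hconj
      (ae_of_all _ fun x => abs_nonneg (fk k x - f x)) (ae_of_all _ fun _ => zero_le_one)
      (by rw [show ENNReal.ofReal (2:ℝ) = 2 by norm_num]; exact hmemabs k)
      (by rw [show ENNReal.ofReal (2:ℝ) = 2 by norm_num]; exact hone)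
    simp only [mul_one, Real.one_rpow, integral_const, smul_eq_mul] at h
    have h2 : ∀ x, |fk k x - f x| ^ (2:ℝ) = |fk k x - f x| ^ 2 := fun x => by
      rw [show (2:ℝ) = ((2:ℕ):ℝ) by norm_num, Real.rpow_natCast]
    simpa only [h2, measureReal_def] using h
  have habs_nonneg : ∀ k, (0:ℝ) ≤ ∫ x, |fk k x - f x| ∂μ :=
    fun k => integral_nonneg fun x => abs_nonneg _
  refine squeeze_zero habs_nonneg hhold ?_
  have h := (hL2.rpow_const (Or.inr (by norm_num : (0:ℝ) ≤ 1/2))).mul_const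
    (((μ Set.univ).toReal) ^ ((1:ℝ)/2))
  rwa [Real.zero_rpow (by norm_num), zero_mul] at h

/-- If `(f_k)` is a sequence in `L²(A)` with `0 ≤ f_k ≤ M`, converging weakly in `L²(A)`
to `f` with `0 ≤ f ≤ M`, and if moreover `f(x) ≥ limsup_k f_k(x)` for a.e. `x ∈ A`, then
`f_k → f` strongly in `L²(A)`, and hence in `L¹(A)`. -/
theorem stmt19 (n : ℕ) (A : Set (EuclideanSpace ℝ (Fin n)))
    (hA : IsOpen A) (hAb : Bornology.IsBounded A) (M : ℝ) (hM : 0 < M)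
    (fk : ℕ → EuclideanSpace ℝ (Fin n) → ℝ) (f : EuclideanSpace ℝ (Fin n) → ℝ)
    (hmeas : ∀ k, AEStronglyMeasurable (fk k) (volume.restrict A))
    (hfmeas : AEStronglyMeasurable f (volume.restrict A))
    (hbk : ∀ k, ∀ᵐ x ∂(volume.restrict A), 0 ≤ fk k x ∧ fk k x ≤ M)
    (hbf : ∀ᵐ x ∂(volume.restrict A), 0 ≤ f x ∧ f x ≤ M)
    (hweak : ∀ g : EuclideanSpace ℝ (Fin n) → ℝ,
      MemLp g 2 (volume.restrict A) →
      Tendsto (fun k => ∫ x in A, fk k x * g x) atTop (nhds (∫ x in A, f x * g x)))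
    (hae : ∀ᵐ x ∂(volume.restrict A), limsup (fun k => fk k x) atTop ≤ f x) :
    Tendsto (fun k => ∫ x in A, |fk k x - f x| ^ 2) atTop (nhds 0) ∧
    Tendsto (fun k => ∫ x in A, |fk k x - f x|) atTop (nhds 0) := by
  haveI : Fact ((volume : Measure (EuclideanSpace ℝ (Fin n))) A < ⊤) := ⟨hAb.measure_lt_top⟩
  exact aux_main hM hmeas hfmeas hbk hbf hweak hae
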